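/- In the setting of the previous statement (fiber Schrödinger operators H_φ(θ) and H_0(θ), band edges λ_{φ,n}^±, λ_{0,n}^±, and Λ₁ = inf_θ (smallest eigenvalue of X(θ)), Λ_ν = sup_θ (largest eigenvalue of X(θ)) for X(θ) = Δ_{m,φ}(θ) − Δ_{m,0}(θ)), the band lengths |σ_{φ,n}| = λ_{φ,n}^+ − λ_{φ,n}^- and |σ_{0,n}| = λ_{0,n}^+ − λ_{0,n}^- satisfy, for every n ∈ {1,…,ν}: | |σ_{φ,n}| − |σ_{0,n}| | ≤ Λ_ν − Λ₁. (Paper: Theorem 2.6, inequality (emf2), at the level of fiber operators.) -/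

import Mathlib

open scoped Classical
open Finset

noncomputable section

/-- The degree of a vertex: the number of oriented edges starting at it. -/
def mdeg {V E : Type} [Fintype E] (o : E → V) (v : V) : ℕ :=
  (Finset.univ.filter fun e => o e = v).card

/-- The combinatorial magnetic Laplacian `Δ_α`. -/
def magLap {V E : Type} [Fintype E] (o t : E → V) (α : E → ℝ)
    (f : V → ℂ) (v : V) : ℂ :=
  ∑ e ∈ Finset.univ.filter (fun e => o e = v),
    (f v - Complex.exp (Complex.I * (α e : ℂ)) * f (t e))

/-- The fiber magnetic Laplacian `Δ_{m,φ}(θ)`. -/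
def fiberLap {V E : Type} [Fintype E] {d : ℕ} (o t : E → V)
    (m : E → Fin d → ℝ) (φ : E → ℝ) (θ : Fin d → ℝ) (f : V → ℂ) (v : V) : ℂ :=
  (mdeg o v : ℂ) * f v -
    ∑ e ∈ Finset.univ.filter (fun e => o e = v),
      Complex.exp (Complex.I * ((φ e + ∑ i, m e i * θ i : ℝ) : ℂ)) * f (t e)

/-- Standard inner product on `ℂ^V` (conjugate-linear in the first argument). -/
def dotC {V : Type} [Fintype V] (f g : V → ℂ) : ℂ :=
  ∑ v, (starRingEnd ℂ) (f v) * g v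

/-- `lam` lists the eigenvalues of the operator `T` on `ℂ^V` in nondecreasing
order, counted with multiplicity (witnessed by an orthonormal eigenbasis). -/
def IsEigList {V : Type} [Fintype V] (T : (V → ℂ) → (V → ℂ))
    (lam : Fin (Fintype.card V) → ℝ) : Prop :=
  Monotone lam ∧ ∃ u : Fin (Fintype.card V) → (V → ℂ),
    (∀ i j, dotC (u i) (u j) = if i = j then (1 : ℂ) else 0) ∧
    ∀ i, T (u i) = fun v => ((lam i : ℝ) : ℂ) * u i v

/-- A closed walk in the multigraph. -/
def IsClosedWalk {V E : Type} (o t : E → V) {k : ℕ} (c : Fin (k + 1) → E) : Prop :=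
  (∀ i : Fin k, t (c i.castSucc) = o (c i.succ)) ∧ t (c (Fin.last k)) = o (c 0)

/-- Two forms have the same flux along every closed walk. -/
def SameFlux {V E W : Type} [AddCommMonoid W] (o t : E → V) (b b' : E → W) : Prop :=
  ∀ (k : ℕ) (c : Fin (k + 1) → E), IsClosedWalk o t c →
    ∑ i, b (c i) = ∑ i, b' (c i)

/-- Connectivity of the multigraph: any two distinct vertices are the endpoints
of some walk. -/
def MGConnected {V E : Type} (o t : E → V) : Prop :=
  ∀ u v : V, u ≠ v → ∃ (k : ℕ) (c : Fin (k + 1) → E),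
    (∀ i : Fin k, t (c i.castSucc) = o (c i.succ)) ∧ o (c 0) = u ∧ t (c (Fin.last k)) = v

/-- The set of fluxes of a form along all closed walks. -/
def fluxSet {V E W : Type} [AddCommMonoid W] (o t : E → V) (b : E → W) : Set W :=
  {w | ∃ (k : ℕ) (c : Fin (k + 1) → E), IsClosedWalk o t c ∧ ∑ i, b (c i) = w}

/-- The number of oriented edges in the support of a form. -/
def suppCard {E : Type} [Fintype E] {W : Type} [Zero W] (b : E → W) : ℕ :=
  (Finset.univ.filter fun e => b e ≠ 0).card

/-- The integer lattice `ℤ^d` inside `ℝ^d`. -/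
def intLattice (d : ℕ) : Set (Fin d → ℝ) :=
  {w | ∀ i, ∃ z : ℤ, w i = (z : ℝ)}


section helpers0
variable {V : Type} [Fintype V]

lemma dotC_re_self (f : V → ℂ) : (dotC f f).re = ∑ v, Complex.normSq (f v) := by
  rw [dotC, Complex.re_sum]
  refine Finset.sum_congr rfl fun v _ => ?_
  rw [mul_comm, Complex.mul_conj]
  simp

lemma dotC_re_self_nonneg (f : V → ℂ) : 0 ≤ (dotC f f).re := by
  rw [dotC_re_self]
  exact Finset.sum_nonneg fun v _ => Complex.normSq_nonneg _

lemma dotC_re_self_pos {f : V → ℂ} (hf : f ≠ 0) : 0 < (dotC f f).re := by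
  rw [dotC_re_self]
  obtain ⟨w, hw⟩ := Function.ne_iff.mp hf
  exact Finset.sum_pos' (fun v _ => Complex.normSq_nonneg _)
    ⟨w, Finset.mem_univ w, by simpa [Complex.normSq_pos] using hw⟩

lemma dotC_sum_right {ι : Type*} (f : V → ℂ) (s : Finset ι) (g : ι → V → ℂ) (c : ι → ℂ) :
    dotC f (∑ i ∈ s, c i • g i) = ∑ i ∈ s, c i * dotC f (g i) := by
  simp only [dotC, Finset.sum_apply, Pi.smul_apply, smul_eq_mul, Finset.mul_sum]
  rw [Finset.sum_comm]
  refine Finset.sum_congr rfl fun i _ => ?_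
  refine Finset.sum_congr rfl fun v _ => ?_
  ring

lemma dotC_quad {ι : Type*} [DecidableEq ι] {u : ι → V → ℂ}
    (hu : ∀ i j, dotC (u i) (u j) = if i = j then (1 : ℂ) else 0)
    (s : Finset ι) (c e : ι → ℂ) :
    dotC (∑ i ∈ s, c i • u i) (∑ j ∈ s, e j • u j) =
      ∑ i ∈ s, (starRingEnd ℂ) (c i) * e i := by
  have h1 : ∀ j, dotC (∑ i ∈ s, c i • u i) (u j) =
      ∑ i ∈ s, (starRingEnd ℂ) (c i) * dotC (u i) (u j) := by
    intro j
    simp only [dotC, Finset.sum_apply, Pi.smul_apply, smul_eq_mul, map_sum, map_mul,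
      Finset.sum_mul, Finset.mul_sum]
    rw [Finset.sum_comm]
    exact Finset.sum_congr rfl fun i _ => Finset.sum_congr rfl fun v _ => by ring
  rw [dotC_sum_right]
  refine (Finset.sum_congr rfl fun j hj => ?_)
  rw [h1]
  simp only [hu, mul_ite, mul_one, mul_zero]
  rw [Finset.sum_ite_eq' s j (fun i => (starRingEnd ℂ) (c i))]
  simp only [hj, if_true]
  ring


end helpers0

section helpers1
variable {V : Type} [Fintype V]

/-- linear independence from dotC-orthonormality -/
lemma linindep_of_dotC {ι : Type*} [DecidableEq ι] [Fintype ι] {u : ι → V → ℂ}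
    (hu : ∀ i j, dotC (u i) (u j) = if i = j then (1 : ℂ) else 0) :
    LinearIndependent ℂ u := by
  rw [Fintype.linearIndependent_iff]
  intro g hg j
  have h := congrArg (fun x => dotC (u j) x) hg
  simp only [dotC_sum_right] at h
  simp only [hu, mul_ite, mul_one, mul_zero] at h
  rw [Finset.sum_ite_eq Finset.univ j g] at h
  simpa [dotC] using h

/-- Rayleigh quotient identity for a vector in the span of part of an eigenbasis. -/
lemma rayleigh_repr {ι : Type*} [DecidableEq ι] (T : (V → ℂ) →ₗ[ℂ] (V → ℂ)) {u : ι → V → ℂ}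
    {a : ι → ℝ}
    (hu : ∀ i j, dotC (u i) (u j) = if i = j then (1 : ℂ) else 0)
    (hTu : ∀ i, T (u i) = fun v => ((a i : ℝ) : ℂ) * u i v)
    (s : Finset ι) (dc : ι → ℂ) :
    (dotC (∑ i ∈ s, dc i • u i) (T (∑ i ∈ s, dc i • u i))).re
      = ∑ i ∈ s, a i * Complex.normSq (dc i) ∧
    (dotC (∑ i ∈ s, dc i • u i) (∑ i ∈ s, dc i • u i)).re
      = ∑ i ∈ s, Complex.normSq (dc i) := by
  have hT : T (∑ i ∈ s, dc i • u i) = ∑ i ∈ s, ((a i : ℂ) * dc i) • u i := by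
    rw [map_sum]
    refine Finset.sum_congr rfl fun i _ => ?_
    rw [map_smul, hTu]
    funext v
    simp only [Pi.smul_apply, smul_eq_mul]
    ring
  constructor
  · rw [hT, dotC_quad hu, Complex.re_sum]
    refine Finset.sum_congr rfl fun i _ => ?_
    have : (starRingEnd ℂ) (dc i) * ((a i : ℂ) * dc i)
        = ((a i * Complex.normSq (dc i) : ℝ) : ℂ) := by
      push_cast
      rw [← Complex.mul_conj]
      ring
    rw [this, Complex.ofReal_re]
  · rw [dotC_quad hu, Complex.re_sum]
    refine Finset.sum_congr rfl fun i _ => ?_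
    rw [mul_comm, Complex.mul_conj, Complex.ofReal_re]

lemma weyl_aux [Nonempty V] (T S : (V → ℂ) →ₗ[ℂ] (V → ℂ))
    {a b : Fin (Fintype.card V) → ℝ} (ha : Monotone a) (hb : Monotone b)
    {u w : Fin (Fintype.card V) → V → ℂ}
    (hu : ∀ i j, dotC (u i) (u j) = if i = j then (1 : ℂ) else 0)
    (hw : ∀ i j, dotC (w i) (w j) = if i = j then (1 : ℂ) else 0)
    (hTu : ∀ i, T (u i) = fun v => ((a i : ℝ) : ℂ) * u i v)
    (hSw : ∀ i, S (w i) = fun v => ((b i : ℝ) : ℂ) * w i v)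
    {C : ℝ} (hC : ∀ f : V → ℂ, (dotC f (T f - S f)).re ≤ C * (dotC f f).re)
    (n : Fin (Fintype.card V)) : a n ≤ b n + C := by
  classical
  have hν := n.isLt
  let ν := Fintype.card V
  have hfr : Module.finrank ℂ (V → ℂ) = ν := by
    simp [Module.finrank_pi, ν]
  have huinj : Function.Injective u := (linindep_of_dotC hu).injective
  have hwinj : Function.Injective w := (linindep_of_dotC hw).injective
  set S₁ : Finset (Fin ν) := Finset.Ici n with hS₁
  set S₂ : Finset (Fin ν) := Finset.Iic n with hS₂
  set U : Submodule ℂ (V → ℂ) := Submodule.span ℂ (↑(S₁.image u)) with hU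
  set W : Submodule ℂ (V → ℂ) := Submodule.span ℂ (↑(S₂.image w)) with hW
  -- dimensions
  have hdim : ∀ (ι' : Finset (Fin ν)) (z : Fin ν → V → ℂ), Function.Injective z →
      LinearIndependent ℂ z →
      Module.finrank ℂ (Submodule.span ℂ (↑(ι'.image z) : Set (V → ℂ))) = ι'.card := by
    intro ι' z hzinj hzli
    have h1 : LinearIndependent ℂ (fun i : {x // x ∈ ι'} => z i) :=
      hzli.comp _ Subtype.val_injective
    have h2 := finrank_span_eq_card h1
    rw [Fintype.card_coe] at h2
    have h3 : (Set.range fun i : {x // x ∈ ι'} => z ↑i) = ↑(ι'.image z) := by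
      rw [Finset.coe_image]
      ext x
      simp [Set.range_comp]
    rw [← h3]
    exact h2
  have hUdim : Module.finrank ℂ U = ν - (n : ℕ) := by
    rw [hU, hdim S₁ u huinj (linindep_of_dotC hu), hS₁, Fin.card_Ici]
  have hWdim : Module.finrank ℂ W = (n : ℕ) + 1 := by
    rw [hW, hdim S₂ w hwinj (linindep_of_dotC hw), hS₂, Fin.card_Iic]
  have hsup : Module.finrank ℂ (U ⊔ W : Submodule ℂ (V → ℂ)) ≤ ν := by
    rw [← hfr]; exact Submodule.finrank_le _
  have hkey := Submodule.finrank_sup_add_finrank_inf_eq U W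
  have hpos : 0 < Module.finrank ℂ (U ⊓ W : Submodule ℂ (V → ℂ)) := by
    omega
  -- a nonzero vector in the intersection
  haveI : Nontrivial (U ⊓ W : Submodule ℂ (V → ℂ)) := Module.finrank_pos_iff.mp hpos
  obtain ⟨x, hx⟩ := exists_ne (0 : (U ⊓ W : Submodule ℂ (V → ℂ)))
  set f : V → ℂ := ↑x with hfdef
  have hf0 : f ≠ 0 := fun h => hx (Subtype.ext h)
  have hfU : f ∈ U := x.2.1
  have hfW : f ∈ W := x.2.2
  -- representation in terms of u over S₁
  obtain ⟨dfun, -, hdf⟩ := Submodule.mem_span_finset.mp hfU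
  obtain ⟨efun, -, hef⟩ := Submodule.mem_span_finset.mp hfW
  rw [Finset.sum_image (fun x _ y _ h => huinj h)] at hdf
  rw [Finset.sum_image (fun x _ y _ h => hwinj h)] at hef
  set dc : Fin ν → ℂ := fun i => dfun (u i) with hdc
  set ec : Fin ν → ℂ := fun i => efun (w i) with hec
  have hrepr1 : f = ∑ i ∈ S₁, dc i • u i := hdf.symm
  have hrepr2 : f = ∑ i ∈ S₂, ec i • w i := hef.symm
  set P : ℝ := (dotC f f).re with hP
  have hPpos : 0 < P := dotC_re_self_pos hf0
  -- lower bound for T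
  obtain ⟨hT1, hT2⟩ := rayleigh_repr T hu hTu S₁ dc
  rw [← hrepr1] at hT1 hT2
  have hTlow : a n * P ≤ (dotC f (T f)).re := by
    rw [hT1, hP, hT2, Finset.mul_sum]
    refine Finset.sum_le_sum fun i hi => ?_
    have : a n ≤ a i := ha (Finset.mem_Ici.mp hi)
    exact mul_le_mul_of_nonneg_right this (Complex.normSq_nonneg _)
  -- upper bound for S
  obtain ⟨hS1, hS2⟩ := rayleigh_repr S hw hSw S₂ ec
  rw [← hrepr2] at hS1 hS2
  have hShigh : (dotC f (S f)).re ≤ b n * P := by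
    rw [hS1, hP, hS2, Finset.mul_sum]
    refine Finset.sum_le_sum fun i hi => ?_
    have : b i ≤ b n := hb (Finset.mem_Iic.mp hi)
    exact mul_le_mul_of_nonneg_right this (Complex.normSq_nonneg _)
  -- combine
  have hsub : (dotC f (T f)).re - (dotC f (S f)).re = (dotC f (T f - S f)).re := by
    have : dotC f (T f - S f) = dotC f (T f) - dotC f (S f) := by
      simp [dotC, Pi.sub_apply, mul_sub, Finset.sum_sub_distrib]
    rw [this, Complex.sub_re]
  have := hC f
  rw [← hsub] at this
  have hfinal : a n * P ≤ (b n + C) * P := by nlinarith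
  exact le_of_mul_le_mul_right (by linarith [hfinal]) hPpos


end helpers1

section ray
variable {V : Type} [Fintype V]

local notation "⟪" x ", " y "⟫" => @inner ℂ _ _ x y

lemma rayleigh_bds [Nonempty V] (X : (V → ℂ) →ₗ[ℂ] (V → ℂ))
    (hsym : ∀ f g, dotC (X f) g = dotC f (X g))
    (Sset : Set ℝ) (hA : BddAbove Sset) (hB : BddBelow Sset)
    (hmem : ∀ (μ : ℝ) (g : V → ℂ), g ≠ 0 → X g = (fun v => (μ : ℂ) * g v) → μ ∈ Sset)
    (f : V → ℂ) :
    sInf Sset * (dotC f f).re ≤ (dotC f (X f)).re ∧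
      (dotC f (X f)).re ≤ sSup Sset * (dotC f f).re := by
  set ι : (V → ℂ) ≃ₗ[ℂ] EuclideanSpace ℂ V := (WithLp.linearEquiv 2 ℂ (V → ℂ)).symm with hι
  have happly : ∀ (h : V → ℂ) (v : V), ι h v = h v := fun h v => rfl
  have hsapply : ∀ (x : EuclideanSpace ℂ V) (v : V), (ι.symm x) v = x v := fun x v => rfl
  set XE : EuclideanSpace ℂ V →ₗ[ℂ] EuclideanSpace ℂ V :=
    ι.toLinearMap ∘ₗ X ∘ₗ ι.symm.toLinearMap with hXE
  have hXEapp : ∀ x : EuclideanSpace ℂ V, XE x = ι (X (ι.symm x)) := fun x => rfl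
  have hinner : ∀ g h : V → ℂ, ⟪ι g, ι h⟫ = dotC g h := by
    intro g h
    simp only [PiLp.inner_apply, RCLike.inner_apply, dotC, happly]
    exact Finset.sum_congr rfl fun _ _ => mul_comm _ _
  have hsymE : XE.IsSymmetric := by
    intro x y
    have h1 : ⟪XE x, y⟫ = dotC (X (ι.symm x)) (ι.symm y) := by
      rw [hXEapp]
      have : y = ι (ι.symm y) := (ι.apply_symm_apply y).symm
      rw [this, hinner, ι.symm_apply_apply]
    have h2 : ⟪x, XE y⟫ = dotC (ι.symm x) (X (ι.symm y)) := by
      rw [hXEapp]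
      have : x = ι (ι.symm x) := (ι.apply_symm_apply x).symm
      conv_lhs => rw [this]
      rw [hinner]
    rw [h1, h2, hsym]
  haveI : Nontrivial (EuclideanSpace ℂ V) := ι.symm.toEquiv.nontrivial
  -- boundedness of the Rayleigh quotient
  set Xc := LinearMap.toContinuousLinearMap XE with hXc
  have hray_bd : ∀ x : {x : EuclideanSpace ℂ V // x ≠ 0},
      RCLike.re ⟪XE x, (x : EuclideanSpace ℂ V)⟫ / ‖(x : EuclideanSpace ℂ V)‖ ^ 2 ≤ ‖Xc‖ := by
    rintro ⟨x, hx⟩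
    have hxpos : (0 : ℝ) < ‖x‖ ^ 2 := by
      have := norm_pos_iff.mpr hx
      positivity
    rw [div_le_iff₀ hxpos]
    have h1 : RCLike.re ⟪XE x, x⟫ ≤ ‖XE x‖ * ‖x‖ := by
      calc RCLike.re ⟪XE x, x⟫ ≤ ‖(⟪XE x, x⟫ : ℂ)‖ := RCLike.re_le_norm _
        _ ≤ ‖XE x‖ * ‖x‖ := norm_inner_le_norm _ _
    have h2 : ‖XE x‖ ≤ ‖Xc‖ * ‖x‖ := by
      have : XE x = Xc x := rfl
      rw [this]
      exact Xc.le_opNorm x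
    nlinarith [norm_nonneg x, norm_nonneg (XE x)]
  have hray_bd' : ∀ x : {x : EuclideanSpace ℂ V // x ≠ 0},
      -‖Xc‖ ≤ RCLike.re ⟪XE x, (x : EuclideanSpace ℂ V)⟫ / ‖(x : EuclideanSpace ℂ V)‖ ^ 2 := by
    rintro ⟨x, hx⟩
    have hxpos : (0 : ℝ) < ‖x‖ ^ 2 := by
      have := norm_pos_iff.mpr hx
      positivity
    rw [le_div_iff₀ hxpos]
    have h1 : -(‖XE x‖ * ‖x‖) ≤ RCLike.re ⟪XE x, x⟫ := by
      have := RCLike.re_le_norm (⟪-(XE x), x⟫ : ℂ)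
      rw [inner_neg_left] at this
      simp only [map_neg, norm_neg] at this
      have h2 : ‖(⟪XE x, x⟫ : ℂ)‖ ≤ ‖XE x‖ * ‖x‖ := norm_inner_le_norm _ _
      linarith
    have h2 : ‖XE x‖ ≤ ‖Xc‖ * ‖x‖ := by
      have : XE x = Xc x := rfl
      rw [this]
      exact Xc.le_opNorm x
    nlinarith [norm_nonneg x]
  -- the sup and inf Rayleigh quotients are eigenvalues
  set μp : ℝ := ⨆ x : {x : EuclideanSpace ℂ V // x ≠ 0},
    RCLike.re ⟪XE x, (x : EuclideanSpace ℂ V)⟫ / ‖(x : EuclideanSpace ℂ V)‖ ^ 2 with hμp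
  set μm : ℝ := ⨅ x : {x : EuclideanSpace ℂ V // x ≠ 0},
    RCLike.re ⟪XE x, (x : EuclideanSpace ℂ V)⟫ / ‖(x : EuclideanSpace ℂ V)‖ ^ 2 with hμm
  have hevp := hsymE.hasEigenvalue_iSup_of_finiteDimensional
  have hevm := hsymE.hasEigenvalue_iInf_of_finiteDimensional
  have hget : ∀ μ : ℝ, Module.End.HasEigenvalue XE (μ : ℂ) → μ ∈ Sset := by
    intro μ hev
    obtain ⟨g, hg⟩ := hev.exists_hasEigenvector
    have hg1 : XE g = (μ : ℂ) • g := Module.End.mem_eigenspace_iff.mp hg.1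
    have hg2 : g ≠ 0 := hg.2
    refine hmem μ (ι.symm g) (fun h => hg2 (by simpa using congrArg ι h)) ?_
    funext v
    have : ι.symm (XE g) = X (ι.symm g) := by rw [hXEapp, ι.symm_apply_apply]
    rw [← this, hg1, map_smul]
    simp only [hsapply, Pi.smul_apply, smul_eq_mul]
  have hμpS : μp ∈ Sset := hget μp hevp
  have hμmS : μm ∈ Sset := hget μm hevm
  -- conclude
  by_cases hf : f = 0
  · subst hf
    simp [dotC, map_zero]
  · have hx0 : ι f ≠ 0 := fun h => hf (by simpa using congrArg ι.symm h)
    have hnorm : ‖ι f‖ ^ 2 = (dotC f f).re := by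
      rw [← hinner f f]
      rw [← inner_self_eq_norm_sq (𝕜 := ℂ) (ι f)]
      rfl
    have hXf : RCLike.re ⟪XE (ι f), ι f⟫ = (dotC f (X f)).re := by
      have : XE (ι f) = ι (X f) := by rw [hXEapp, ι.symm_apply_apply]
      rw [this]
      have h3 : ⟪ι (X f), ι f⟫ = dotC (X f) f := hinner _ _
      rw [h3, hsym]
      rfl
    have hpos : (0 : ℝ) < ‖ι f‖ ^ 2 := by
      have := norm_pos_iff.mpr hx0
      positivity
    have hup : RCLike.re ⟪XE (ι f), ι f⟫ / ‖ι f‖ ^ 2 ≤ μp :=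
      le_ciSup ⟨‖Xc‖, Set.forall_mem_range.mpr hray_bd⟩ (⟨ι f, hx0⟩ : {x : EuclideanSpace ℂ V // x ≠ 0})
    have hdn : μm ≤ RCLike.re ⟪XE (ι f), ι f⟫ / ‖ι f‖ ^ 2 :=
      ciInf_le ⟨-‖Xc‖, Set.forall_mem_range.mpr hray_bd'⟩ (⟨ι f, hx0⟩ : {x : EuclideanSpace ℂ V // x ≠ 0})
    have h1 : RCLike.re ⟪XE (ι f), ι f⟫ ≤ μp * ‖ι f‖ ^ 2 := by
      rw [div_le_iff₀ hpos] at hup; linarith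
    have h2 : μm * ‖ι f‖ ^ 2 ≤ RCLike.re ⟪XE (ι f), ι f⟫ := by
      rw [le_div_iff₀ hpos] at hdn; linarith
    have hsGe : μp ≤ sSup Sset := le_csSup hA hμpS
    have hsLe : sInf Sset ≤ μm := csInf_le hB hμmS
    constructor
    · rw [← hXf, ← hnorm]
      nlinarith
    · rw [← hXf, ← hnorm]
      nlinarith
end ray


section ops
variable {V E : Type} [Fintype V] [Fintype E] {d : ℕ}

/-- The fiber Schrödinger operator as a linear map. -/
def HLmap (o t : E → V) (m : E → Fin d → ℝ) (φ : E → ℝ) (θ : Fin d → ℝ) (Q : V → ℝ) :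
    (V → ℂ) →ₗ[ℂ] (V → ℂ) where
  toFun f := fun v => fiberLap o t m φ θ f v + (Q v : ℂ) * f v
  map_add' f g := by
    funext v
    simp only [fiberLap, Pi.add_apply, mul_add, Finset.sum_add_distrib]
    ring
  map_smul' c f := by
    funext v
    simp only [fiberLap, Pi.smul_apply, smul_eq_mul, RingHom.id_apply]
    rw [Finset.sum_congr rfl (fun e _ => by ring :
      ∀ e ∈ Finset.univ.filter (fun e => o e = v),
        Complex.exp (Complex.I * ((φ e + ∑ i, m e i * θ i : ℝ) : ℂ)) * (c * f (t e))
          = c * (Complex.exp (Complex.I * ((φ e + ∑ i, m e i * θ i : ℝ) : ℂ)) * f (t e))),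
      ← Finset.mul_sum]
    ring

lemma HLmap_apply (o t : E → V) (m : E → Fin d → ℝ) (φ : E → ℝ) (θ : Fin d → ℝ) (Q : V → ℝ)
    (f : V → ℂ) :
    HLmap o t m φ θ Q f = fun v => fiberLap o t m φ θ f v + (Q v : ℂ) * f v := rfl

/-- The coefficient of the difference operator. -/
def ce (m : E → Fin d → ℝ) (φ : E → ℝ) (θ : Fin d → ℝ) (e : E) : ℂ :=
  Complex.exp (Complex.I * ((φ e + ∑ i, m e i * θ i : ℝ) : ℂ)) -
    Complex.exp (Complex.I * ((0 + ∑ i, m e i * θ i : ℝ) : ℂ))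

lemma X_apply (o t : E → V) (m : E → Fin d → ℝ) (φ : E → ℝ) (θ : Fin d → ℝ)
    (f : V → ℂ) (v : V) :
    fiberLap o t m φ θ f v - fiberLap o t m (fun _ => 0) θ f v
      = -∑ e ∈ Finset.univ.filter (fun e => o e = v), ce m φ θ e * f (t e) := by
  simp only [fiberLap, ce, sub_mul, Finset.sum_sub_distrib]
  ring

lemma ce_abs_le (m : E → Fin d → ℝ) (φ : E → ℝ) (θ : Fin d → ℝ) (e : E) :
    ‖ce m φ θ e‖ ≤ 2 := by
  have h : ∀ x : ℝ, ‖Complex.exp (Complex.I * (x : ℂ))‖ = 1 := by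
    intro x
    rw [mul_comm]
    exact Complex.norm_exp_ofReal_mul_I x
  calc ‖ce m φ θ e‖ ≤ ‖_‖ + ‖_‖ :=
        norm_sub_le _ _
    _ ≤ 2 := by rw [h, h]; norm_num

lemma ce_conj_inv (o t : E → V) (inv : E → E) (hinv : ∀ e, inv (inv e) = e)
    (m : E → Fin d → ℝ) (hm : ∀ e, m (inv e) = - m e)
    (φ : E → ℝ) (hφ : ∀ e, φ (inv e) = - φ e) (θ : Fin d → ℝ) (e : E) :
    (starRingEnd ℂ) (ce m φ θ (inv e)) = ce m φ θ e := by
  have hconj : ∀ x : ℝ, (starRingEnd ℂ) (Complex.exp (Complex.I * (x : ℂ)))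
      = Complex.exp (Complex.I * ((-x : ℝ) : ℂ)) := by
    intro x
    rw [← Complex.exp_conj]
    congr 1
    simp only [map_mul, Complex.conj_I, Complex.conj_ofReal]
    push_cast
    ring
  have hsum : (∑ i, m (inv e) i * θ i) = -∑ i, m e i * θ i := by
    rw [← Finset.sum_neg_distrib]
    exact Finset.sum_congr rfl fun i _ => by rw [hm]; simp [neg_mul]
  simp only [ce, map_sub, hconj, hφ, hsum]
  congr 3 <;> push_cast <;> ring

end ops

section sym
variable {V E : Type} [Fintype V] [Fintype E] {d : ℕ}

lemma dotC_X_sym (o t : E → V) (inv : E → E) (hinv : ∀ e, inv (inv e) = e)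
    (hoi : ∀ e, o (inv e) = t e) (hti : ∀ e, t (inv e) = o e)
    (m : E → Fin d → ℝ) (hm : ∀ e, m (inv e) = - m e)
    (φ : E → ℝ) (hφ : ∀ e, φ (inv e) = - φ e) (θ : Fin d → ℝ)
    (f g : V → ℂ)
    (Xop : (V → ℂ) → (V → ℂ))
    (hXop : ∀ h v, Xop h v = -∑ e ∈ Finset.univ.filter (fun e => o e = v),
      ce m φ θ e * h (t e)) :
    dotC (Xop f) g = dotC f (Xop g) := by
  have hR : dotC f (Xop g) = -∑ e, (starRingEnd ℂ) (f (o e)) * (ce m φ θ e * g (t e)) := by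
    rw [dotC]
    have h1 : ∀ v, (starRingEnd ℂ) (f v) * (Xop g v)
        = -∑ e ∈ Finset.univ.filter (fun e => o e = v),
            (starRingEnd ℂ) (f (o e)) * (ce m φ θ e * g (t e)) := by
      intro v
      rw [hXop, mul_neg, Finset.mul_sum]
      congr 1
      refine Finset.sum_congr rfl fun e he => ?_
      rw [(Finset.mem_filter.mp he).2]
    rw [Finset.sum_congr rfl fun v _ => h1 v, Finset.sum_neg_distrib]
    congr 1
    exact Finset.sum_fiberwise Finset.univ o _
  have hL : dotC (Xop f) g = -∑ e, (starRingEnd ℂ) (ce m φ θ e) *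
      ((starRingEnd ℂ) (f (t e)) * g (o e)) := by
    rw [dotC]
    have h1 : ∀ v, (starRingEnd ℂ) (Xop f v) * g v
        = -∑ e ∈ Finset.univ.filter (fun e => o e = v),
            (starRingEnd ℂ) (ce m φ θ e) * ((starRingEnd ℂ) (f (t e)) * g (o e)) := by
      intro v
      rw [hXop, map_neg, map_sum, neg_mul, Finset.sum_mul]
      congr 1
      refine Finset.sum_congr rfl fun e he => ?_
      rw [map_mul, (Finset.mem_filter.mp he).2]
      ring
    rw [Finset.sum_congr rfl fun v _ => h1 v, Finset.sum_neg_distrib]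
    congr 1
    exact Finset.sum_fiberwise Finset.univ o _
  rw [hL, hR]
  congr 1
  -- reindex by the involution
  have hbij : Function.Bijective inv := Function.Involutive.bijective hinv
  rw [← Function.Bijective.sum_comp hbij
    (fun e => (starRingEnd ℂ) (f (o e)) * (ce m φ θ e * g (t e)))]
  refine Finset.sum_congr rfl fun e _ => ?_
  rw [hoi, hti]
  have hce : ce m φ θ (inv e) = (starRingEnd ℂ) (ce m φ θ e) := by
    have h := ce_conj_inv o t inv hinv m hm φ hφ θ (inv e)
    rw [hinv] at h
    exact h.symm
  rw [hce]
  ring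

/-- A crude bound on eigenvalues of operators of hopping type. -/
lemma eig_bound [Nonempty V] (o t : E → V) (A : V → ℝ) (c : E → ℂ) (aK K : ℝ)
    (hA : ∀ v, |A v| ≤ aK) (hc : ∀ e, ‖c e‖ ≤ K) (hK : 0 ≤ K)
    (μ : ℝ) (g : V → ℂ) (hg : g ≠ 0)
    (heq : ∀ v, (A v : ℂ) * g v - ∑ e ∈ Finset.univ.filter (fun e => o e = v),
      c e * g (t e) = (μ : ℂ) * g v) :
    |μ| ≤ aK + K * Fintype.card E := by
  obtain ⟨v₀, _, hmax⟩ := Finset.exists_max_image Finset.univ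
    (fun v => ‖g v‖) ⟨Classical.arbitrary V, Finset.mem_univ _⟩
  have hgv : 0 < ‖g v₀‖ := by
    obtain ⟨w, hw⟩ := Function.ne_iff.mp hg
    calc (0 : ℝ) < ‖g w‖ := by simpa using hw
      _ ≤ ‖g v₀‖ := hmax w (Finset.mem_univ w)
  have heq2 : ((μ - A v₀ : ℝ) : ℂ) * g v₀
      = -∑ e ∈ Finset.univ.filter (fun e => o e = v₀), c e * g (t e) := by
    have := heq v₀
    push_cast
    linear_combination -this
  have habs : |μ - A v₀| * ‖g v₀‖ ≤ K * Fintype.card E * ‖g v₀‖ := by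
    have h1 : ‖((μ - A v₀ : ℝ) : ℂ) * g v₀‖
        = |μ - A v₀| * ‖g v₀‖ := by
      rw [norm_mul, Complex.norm_real, Real.norm_eq_abs]
    rw [← h1, heq2, norm_neg]
    calc ‖∑ e ∈ Finset.univ.filter (fun e => o e = v₀), c e * g (t e)‖
        ≤ ∑ e ∈ Finset.univ.filter (fun e => o e = v₀), ‖c e * g (t e)‖ :=
          norm_sum_le _ _
      _ ≤ ∑ e ∈ Finset.univ.filter (fun e => o e = v₀), K * ‖g v₀‖ := by
          refine Finset.sum_le_sum fun e _ => ?_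
          rw [norm_mul]
          exact mul_le_mul (hc e) (hmax (t e) (Finset.mem_univ _))
            (norm_nonneg _) hK
      _ = (Finset.univ.filter (fun e => o e = v₀)).card * (K * ‖g v₀‖) := by
          rw [Finset.sum_const, nsmul_eq_mul]
      _ ≤ Fintype.card E * (K * ‖g v₀‖) := by
          refine mul_le_mul_of_nonneg_right ?_ (by positivity)
          exact_mod_cast Nat.cast_le.mpr (le_trans (Finset.card_filter_le _ _)
            (le_of_eq (Finset.card_univ)))
      _ = K * Fintype.card E * ‖g v₀‖ := by ring
  have h2 : |μ - A v₀| ≤ K * Fintype.card E := le_of_mul_le_mul_right habs hgv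
  calc |μ| = |(μ - A v₀) + A v₀| := by ring_nf
    _ ≤ |μ - A v₀| + |A v₀| := abs_add_le _ _
    _ ≤ K * Fintype.card E + aK := add_le_add h2 (hA v₀)
    _ = aK + K * Fintype.card E := by ring
end sym


/-- Variation of the band lengths under a perturbation by a magnetic field:
`||σ_{φ,n}| − |σ_{0,n}|| ≤ Λ_ν − Λ₁`, where `Λ₁` (resp. `Λ_ν`) is the infimum
of the smallest (resp. supremum of the largest) eigenvalue of
`X(θ) = Δ_{m,φ}(θ) − Δ_{m,0}(θ)` over `θ`. -/

theorem fiber_band_length_variation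
    {V E : Type} [Fintype V] [Fintype E] [Nonempty V] {d : ℕ}
    (o t : E → V) (inv : E → E)
    (hfp : ∀ e, inv e ≠ e) (hinv : ∀ e, inv (inv e) = e)
    (hoi : ∀ e, o (inv e) = t e) (hti : ∀ e, t (inv e) = o e)
    (m : E → Fin d → ℝ) (hm : ∀ e, m (inv e) = - m e)
    (φ : E → ℝ) (hφ : ∀ e, φ (inv e) = - φ e)
    (Q : V → ℝ)
    (lamφ lam0 : (Fin d → ℝ) → Fin (Fintype.card V) → ℝ)
    (hlamφ : ∀ θ, IsEigList
      (fun f v => fiberLap o t m φ θ f v + (Q v : ℂ) * f v) (lamφ θ))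
    (hlam0 : ∀ θ, IsEigList
      (fun f v => fiberLap o t m (fun _ => 0) θ f v + (Q v : ℂ) * f v) (lam0 θ))
    (Λ₁ Λν : ℝ)
    (hΛ₁ : Λ₁ = sInf {μ : ℝ | ∃ (θ : Fin d → ℝ) (f : V → ℂ), f ≠ 0 ∧
      ∀ v, fiberLap o t m φ θ f v - fiberLap o t m (fun _ => 0) θ f v = (μ : ℂ) * f v})
    (hΛν : Λν = sSup {μ : ℝ | ∃ (θ : Fin d → ℝ) (f : V → ℂ), f ≠ 0 ∧
      ∀ v, fiberLap o t m φ θ f v - fiberLap o t m (fun _ => 0) θ f v = (μ : ℂ) * f v}) :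
    ∀ n : Fin (Fintype.card V),
      |(sSup (Set.range fun θ => lamφ θ n) - sInf (Set.range fun θ => lamφ θ n)) -
        (sSup (Set.range fun θ => lam0 θ n) - sInf (Set.range fun θ => lam0 θ n))|
      ≤ Λν - Λ₁ := by
  intro n
  set Sset : Set ℝ := {μ : ℝ | ∃ (θ : Fin d → ℝ) (f : V → ℂ), f ≠ 0 ∧
      ∀ v, fiberLap o t m φ θ f v - fiberLap o t m (fun _ => 0) θ f v = (μ : ℂ) * f v}
    with hSset
  -- elements of Sset are uniformly bounded
  have hSbd : ∀ μ ∈ Sset, |μ| ≤ 0 + 2 * Fintype.card E := by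
    rintro μ ⟨θ', f, hf, heig⟩
    refine eig_bound o t (fun _ => (0 : ℝ)) (ce m φ θ') 0 2 (fun v => by simp)
      (ce_abs_le m φ θ') (by norm_num) μ f hf ?_
    intro v
    have h := heig v
    rw [X_apply o t m φ θ' f v] at h
    push_cast
    linear_combination h
  have hA : BddAbove Sset := ⟨0 + 2 * Fintype.card E, fun μ h => (abs_le.mp (hSbd μ h)).2⟩
  have hB : BddBelow Sset := ⟨-(0 + 2 * Fintype.card E), fun μ h => (abs_le.mp (hSbd μ h)).1⟩
  -- uniform bound on the eigenvalue lists
  set C0 : ℝ := ((Fintype.card E : ℝ) + ∑ v, |Q v|) + 1 * Fintype.card E with hC0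
  have hbound : ∀ (ψ : E → ℝ) (lam : (Fin d → ℝ) → Fin (Fintype.card V) → ℝ),
      (∀ θ, IsEigList (fun f v => fiberLap o t m ψ θ f v + (Q v : ℂ) * f v) (lam θ)) →
      ∀ θ (k : Fin (Fintype.card V)), |lam θ k| ≤ C0 := by
    intro ψ lam hlam θ k
    obtain ⟨hmono, u, hortho, heig⟩ := hlam θ
    have hu0 : u k ≠ 0 := by
      intro h
      have h1 := hortho k k
      rw [h] at h1
      simp [dotC] at h1
    refine eig_bound o t (fun v => ((mdeg o v : ℝ) + Q v))
      (fun e => Complex.exp (Complex.I * ((ψ e + ∑ i, m e i * θ i : ℝ) : ℂ)))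
      ((Fintype.card E : ℝ) + ∑ v, |Q v|) 1 ?_ ?_ one_pos.le (lam θ k) (u k) hu0 ?_
    · intro v
      have h1 : (mdeg o v : ℝ) ≤ Fintype.card E := by
        have := Finset.card_filter_le (Finset.univ : Finset E) (fun e => o e = v)
        rw [Finset.card_univ] at this
        exact_mod_cast this
      have h2 : |Q v| ≤ ∑ w, |Q w| :=
        Finset.single_le_sum (fun i _ => abs_nonneg (Q i)) (Finset.mem_univ v)
      calc |(mdeg o v : ℝ) + Q v| ≤ |(mdeg o v : ℝ)| + |Q v| := abs_add_le _ _
        _ ≤ (Fintype.card E : ℝ) + ∑ w, |Q w| := by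
            rw [abs_of_nonneg (by positivity : (0:ℝ) ≤ (mdeg o v : ℝ))]
            exact add_le_add h1 h2
    · intro e
      have h := Complex.norm_exp_ofReal_mul_I ((ψ e + ∑ i, m e i * θ i : ℝ))
      rw [mul_comm] at h
      exact le_of_eq h
    · intro v
      have h := congrFun (heig k) v
      simp only [fiberLap] at h ⊢
      push_cast at h ⊢
      linear_combination h
  have hbφ := hbound φ lamφ hlamφ
  have hb0 := hbound (fun _ => 0) lam0 hlam0
  -- the pointwise (in θ) eigenvalue comparison
  have key : ∀ θ : Fin d → ℝ, lamφ θ n ≤ lam0 θ n + Λν ∧ lam0 θ n + Λ₁ ≤ lamφ θ n := by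
    intro θ
    obtain ⟨hmφ, u, huo, hue⟩ := hlamφ θ
    obtain ⟨hm0, w, hwo, hwe⟩ := hlam0 θ
    set T : (V → ℂ) →ₗ[ℂ] (V → ℂ) := HLmap o t m φ θ Q with hT
    set S : (V → ℂ) →ₗ[ℂ] (V → ℂ) := HLmap o t m (fun _ => 0) θ Q with hS
    have hXapp : ∀ (h : V → ℂ) (v : V), (T - S) h v =
        -∑ e ∈ Finset.univ.filter (fun e => o e = v), ce m φ θ e * h (t e) := by
      intro h v
      rw [← X_apply o t m φ θ h v]
      show (T h v) - (S h v) = _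
      rw [hT, hS]
      show (fiberLap o t m φ θ h v + (Q v : ℂ) * h v)
        - (fiberLap o t m (fun _ => 0) θ h v + (Q v : ℂ) * h v) = _
      ring
    have hsym : ∀ f g : V → ℂ, dotC ((T - S) f) g = dotC f ((T - S) g) :=
      fun f g => dotC_X_sym o t inv hinv hoi hti m hm φ hφ θ f g (fun h => (T - S) h) hXapp
    have hmem : ∀ (μ : ℝ) (g : V → ℂ), g ≠ 0 →
        ((T - S) g = fun v => (μ : ℂ) * g v) → μ ∈ Sset := by
      intro μ g hg hEq
      refine ⟨θ, g, hg, fun v => ?_⟩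
      have h := congrFun hEq v
      rw [hXapp g v] at h
      rw [X_apply o t m φ θ g v]
      exact h
    have hray := rayleigh_bds (T - S) hsym Sset hA hB hmem
    have hC1 : ∀ f : V → ℂ, (dotC f (T f - S f)).re ≤ Λν * (dotC f f).re := by
      intro f
      have h := (hray f).2
      rw [← hΛν] at h
      have : (T - S) f = T f - S f := rfl
      rw [this] at h
      exact h
    have hC2 : ∀ f : V → ℂ, (dotC f (S f - T f)).re ≤ (-Λ₁) * (dotC f f).re := by
      intro f
      have h := (hray f).1
      rw [← hΛ₁] at h
      have h2 : (T - S) f = T f - S f := rfl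
      rw [h2] at h
      have h3 : dotC f (S f - T f) = - dotC f (T f - S f) := by
        simp only [dotC, Pi.sub_apply, ← Finset.sum_neg_distrib]
        exact Finset.sum_congr rfl fun x _ => by ring
      rw [h3, Complex.neg_re]
      linarith
    constructor
    · exact weyl_aux T S hmφ hm0 huo hwo (fun i => hue i) (fun i => hwe i) hC1 n
    · have := weyl_aux S T hm0 hmφ hwo huo (fun i => hwe i) (fun i => hue i) hC2 n
      linarith
  -- assemble the band edge inequalities
  have hne : Nonempty (Fin d → ℝ) := ⟨fun _ => 0⟩
  obtain ⟨θ₀⟩ := hne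
  have hneφ : (Set.range fun θ => lamφ θ n).Nonempty := ⟨lamφ θ₀ n, ⟨θ₀, rfl⟩⟩
  have hne0 : (Set.range fun θ => lam0 θ n).Nonempty := ⟨lam0 θ₀ n, ⟨θ₀, rfl⟩⟩
  have hbddφA : BddAbove (Set.range fun θ => lamφ θ n) := by
    refine ⟨C0, ?_⟩
    rintro x ⟨θ, rfl⟩
    exact (abs_le.mp (hbφ θ n)).2
  have hbddφB : BddBelow (Set.range fun θ => lamφ θ n) := by
    refine ⟨-C0, ?_⟩
    rintro x ⟨θ, rfl⟩
    exact (abs_le.mp (hbφ θ n)).1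
  have hbdd0A : BddAbove (Set.range fun θ => lam0 θ n) := by
    refine ⟨C0, ?_⟩
    rintro x ⟨θ, rfl⟩
    exact (abs_le.mp (hb0 θ n)).2
  have hbdd0B : BddBelow (Set.range fun θ => lam0 θ n) := by
    refine ⟨-C0, ?_⟩
    rintro x ⟨θ, rfl⟩
    exact (abs_le.mp (hb0 θ n)).1
  set Aφ := sSup (Set.range fun θ => lamφ θ n) with hAφ
  set aφ := sInf (Set.range fun θ => lamφ θ n) with haφ
  set A0 := sSup (Set.range fun θ => lam0 θ n) with hA0
  set a0 := sInf (Set.range fun θ => lam0 θ n) with ha0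
  have h1 : Aφ ≤ A0 + Λν := by
    refine csSup_le hneφ ?_
    rintro x ⟨θ, rfl⟩
    exact le_trans (key θ).1 (add_le_add (le_csSup hbdd0A ⟨θ, rfl⟩) le_rfl)
  have h2 : A0 + Λ₁ ≤ Aφ := by
    have : A0 ≤ Aφ - Λ₁ := by
      refine csSup_le hne0 ?_
      rintro x ⟨θ, rfl⟩
      have hk := (key θ).2
      have : lamφ θ n ≤ Aφ := le_csSup hbddφA ⟨θ, rfl⟩
      linarith
    linarith
  have h3 : a0 + Λ₁ ≤ aφ := by
    refine le_csInf hneφ ?_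
    rintro x ⟨θ, rfl⟩
    have hk := (key θ).2
    have : a0 ≤ lam0 θ n := csInf_le hbdd0B ⟨θ, rfl⟩
    linarith
  have h4 : aφ ≤ a0 + Λν := by
    have : aφ - Λν ≤ a0 := by
      refine le_csInf hne0 ?_
      rintro x ⟨θ, rfl⟩
      have hk := (key θ).1
      have : aφ ≤ lamφ θ n := csInf_le hbddφB ⟨θ, rfl⟩
      linarith
    linarith
  rw [abs_le]
  constructor <;> linarith
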